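/- Let μ₁, μ₂ be probability measures on ℝ whose characteristic functions satisfy μ̂₁(u+v)·μ̂₂(u+av) = μ̂₁(u−v)·μ̂₂(u−av) for all u, v ∈ ℝ, where a ≠ 0 and a ≠ −1, and suppose μ̂₁, μ̂₂ are strictly positive everywhere. Then there exist σ₁, σ₂ ≥ 0 with μ̂₁(s) = exp(−σ₁ s²) and μ̂₂(s) = exp(−σ₂ s²) for all s ∈ ℝ, and moreover σ₁ + a σ₂ = 0 (so that if a > 0 then σ₁ = σ₂ = 0). -/

import Mathlib

open MeasureTheory

/-- The characteristic function of a measure on `ℝ`. -/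
noncomputable def charFunR (μ : Measure ℝ) (s : ℝ) : ℂ :=
  ∫ x, Complex.exp (Complex.I * s * x) ∂μ

/-- A continuous additive function on `ℝ` is linear. -/
lemma heyde_additive_linear (h : ℝ → ℝ) (hc : Continuous h)
    (hadd : ∀ x y, h (x + y) = h x + h y) : ∀ x, h x = h 1 * x := by
  intro x
  set L := (AddMonoidHom.mk' h hadd).toRealLinearMap hc with hL
  have h1 : L x = h x := by rw [hL]; rfl
  have h2 : L 1 = h 1 := by rw [hL]; rfl
  have h3 := L.map_smul x (1 : ℝ)
  rw [smul_eq_mul, mul_one, smul_eq_mul] at h3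
  rw [← h1, h3, h2, mul_comm]

/-- A continuous function whose symmetrized second differences are translation invariant
is a quadratic polynomial (with zero constant term, given `ψ 0 = 0`). -/
lemma heyde_quadratic_of_Q (ψ : ℝ → ℝ) (hc : Continuous ψ) (h0 : ψ 0 = 0)
    (hQ : ∀ s α β : ℝ, ψ (s + α + β) - ψ (s + α) - ψ (s + β) + ψ s
        = ψ (α + β) - ψ α - ψ β) :
    ∃ m l, ∀ s, ψ s = m * s ^ 2 + l * s := by
  have key : ∀ β s : ℝ, ψ (s + β) - ψ s - ψ β = (ψ (1 + β) - ψ 1 - ψ β) * s := by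
    intro β
    have hadd : ∀ x y, (fun s => ψ (s + β) - ψ s - ψ β) (x + y)
        = (fun s => ψ (s + β) - ψ s - ψ β) x + (fun s => ψ (s + β) - ψ s - ψ β) y := by
      intro x y
      have h1 := hQ x β y
      rw [show x + β + y = x + y + β from by ring, show β + y = y + β from by ring] at h1
      simp only []
      linarith
    have hcont : Continuous (fun s => ψ (s + β) - ψ s - ψ β) :=
      ((hc.comp (continuous_id.add continuous_const)).sub hc).sub continuous_const
    have := heyde_additive_linear _ hcont hadd
    intro s
    simpa using this s
  set m : ℝ := ψ (1 + 1) - ψ 1 - ψ 1 with hm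
  have hms : ∀ s t : ℝ, ψ (s + t) = ψ s + ψ t + m * s * t := by
    intro s t
    have h1 := key t s
    have hmt : ψ (1 + t) - ψ 1 - ψ t = m * t := by
      have h5 := key 1 t
      rw [show t + 1 = 1 + t from by ring, ← hm] at h5
      linarith
    rw [hmt] at h1
    linarith
  have hχadd : ∀ x y, (fun s => ψ s - m / 2 * s ^ 2) (x + y)
      = (fun s => ψ s - m / 2 * s ^ 2) x + (fun s => ψ s - m / 2 * s ^ 2) y := by
    intro x y
    simp only []
    nlinarith [hms x y]
  have hχc : Continuous (fun s => ψ s - m / 2 * s ^ 2) :=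
    hc.sub (continuous_const.mul (continuous_pow 2))
  have := heyde_additive_linear _ hχc hχadd
  refine ⟨m / 2, ψ 1 - m / 2 * 1 ^ 2, fun s => ?_⟩
  have h6 := this s
  linarith

/-- From the (logarithmic) Heyde functional equation to the Fréchet-type condition. -/
lemma heyde_to_Q (φ ψ : ℝ → ℝ) (h0 : ψ 0 = 0) (b c : ℝ) (hb : b ≠ 0) (hc : c ≠ 0)
    (hd : c ^ 2 - b ^ 2 ≠ 0)
    (hE : ∀ x y : ℝ, φ x + ψ (b * x + c * y) = φ y + ψ (c * x + b * y)) :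
    ∀ s α β : ℝ, ψ (s + α + β) - ψ (s + α) - ψ (s + β) + ψ s
        = ψ (α + β) - ψ α - ψ β := by
  intro s α β
  set h : ℝ := α / c with hh
  set g : ℝ := β / b with hg
  set x : ℝ := c * s / (c ^ 2 - b ^ 2) with hx
  set y : ℝ := -(b * s) / (c ^ 2 - b ^ 2) with hy
  have e1 := hE (x + h) (y + g)
  have e2 := hE (x + h) y
  have e3 := hE x (y + g)
  have e4 := hE x y
  have e5 := hE h g
  have e6 := hE h 0
  have e7 := hE 0 g
  rw [show b * (x + h) + c * (y + g) = b * h + c * g from by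
        rw [hx, hy, hh, hg]; field_simp; ring,
      show c * (x + h) + b * (y + g) = s + α + β from by
        rw [hx, hy, hh, hg]; field_simp; ring] at e1
  rw [show b * (x + h) + c * y = b * h from by
        rw [hx, hy, hh]; field_simp; ring,
      show c * (x + h) + b * y = s + α from by
        rw [hx, hy, hh]; field_simp; ring] at e2
  rw [show b * x + c * (y + g) = c * g from by
        rw [hx, hy, hg]; field_simp; ring,
      show c * x + b * (y + g) = s + β from by
        rw [hx, hy, hg]; field_simp; ring] at e3
  rw [show b * x + c * y = 0 from by
        rw [hx, hy]; field_simp; ring,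
      show c * x + b * y = s from by
        rw [hx, hy]; field_simp; ring] at e4
  rw [show c * h + b * g = α + β from by rw [hh, hg]; field_simp] at e5
  rw [show b * h + c * 0 = b * h from by ring,
      show c * h + b * 0 = α from by rw [hh]; field_simp; ring] at e6
  rw [show b * 0 + c * g = c * g from by ring,
      show c * 0 + b * g = β from by rw [hg]; field_simp; ring] at e7
  linarith

lemma heyde_norm_exp_I_mul (s x : ℝ) : ‖Complex.exp (Complex.I * s * x)‖ = 1 := by
  rw [show Complex.I * s * x = (↑(s * x) : ℂ) * Complex.I from by push_cast; ring]
  rw [Complex.norm_exp_ofReal_mul_I]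

lemma charFunR_zero (μ : Measure ℝ) [IsProbabilityMeasure μ] : charFunR μ 0 = 1 := by
  simp [charFunR]

lemma charFunR_continuous (μ : Measure ℝ) [IsProbabilityMeasure μ] :
    Continuous (charFunR μ) := by
  apply continuous_of_dominated (bound := fun _ : ℝ => (1 : ℝ))
  · exact fun s => (Complex.continuous_exp.comp (by continuity)).aestronglyMeasurable
  · exact fun s => Filter.Eventually.of_forall fun x => le_of_eq (heyde_norm_exp_I_mul s x)
  · exact integrable_const 1
  · exact Filter.Eventually.of_forall fun x => Complex.continuous_exp.comp (by continuity)

lemma charFunR_neg (μ : Measure ℝ) (s : ℝ) :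
    charFunR μ (-s) = (starRingEnd ℂ) (charFunR μ s) := by
  rw [charFunR, charFunR, ← integral_conj]
  congr 1
  ext x
  rw [← Complex.exp_conj]
  congr 1
  simp [Complex.conj_I]

lemma charFunR_re_le_one (μ : Measure ℝ) [IsProbabilityMeasure μ] (s : ℝ) :
    (charFunR μ s).re ≤ 1 := by
  have h1 : ‖charFunR μ s‖ ≤ 1 := by
    rw [charFunR]
    calc ‖∫ x, Complex.exp (Complex.I * s * x) ∂μ‖
        ≤ 1 * (μ Set.univ).toReal := by
          apply norm_integral_le_of_norm_le_const
          exact Filter.Eventually.of_forall fun x => le_of_eq (heyde_norm_exp_I_mul s x)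
      _ = 1 := by simp
  calc (charFunR μ s).re ≤ ‖charFunR μ s‖ := Complex.re_le_norm _
    _ ≤ 1 := h1

/-- Reconstruction of a characteristic function from its (quadratic) logarithm. -/
lemma charFunR_eq_of_re (μ : Measure ℝ) (σ s : ℝ)
    (him : (charFunR μ s).im = 0)
    (hre : (charFunR μ s).re = Real.exp (-(σ * s ^ 2))) :
    charFunR μ s = Complex.exp (-(σ * s ^ 2)) := by
  have : (Complex.exp (-((σ : ℂ) * (s : ℂ) ^ 2))) = ((Real.exp (-(σ * s ^ 2)) : ℝ) : ℂ) := by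
    rw [show (-((σ : ℂ) * (s : ℂ) ^ 2)) = ((-(σ * s ^ 2) : ℝ) : ℂ) from by push_cast; ring,
      Complex.ofReal_exp]
  rw [show (-(↑σ * (↑s : ℂ) ^ 2)) = -((σ : ℂ) * (s : ℂ) ^ 2) from rfl, this]
  apply Complex.ext
  · rw [Complex.ofReal_re]; exact hre
  · rw [Complex.ofReal_im]; exact him

theorem heyde_on_real_line (μ₁ μ₂ : Measure ℝ)
    [IsProbabilityMeasure μ₁] [IsProbabilityMeasure μ₂]
    (a : ℝ) (ha0 : a ≠ 0) (ha1 : a ≠ -1)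
    (hpos₁ : ∀ s : ℝ, (charFunR μ₁ s).im = 0 ∧ 0 < (charFunR μ₁ s).re)
    (hpos₂ : ∀ s : ℝ, (charFunR μ₂ s).im = 0 ∧ 0 < (charFunR μ₂ s).re)
    (heq : ∀ u v : ℝ,
      charFunR μ₁ (u + v) * charFunR μ₂ (u + a * v) =
      charFunR μ₁ (u - v) * charFunR μ₂ (u - a * v)) :
    ∃ σ₁ σ₂ : ℝ, 0 ≤ σ₁ ∧ 0 ≤ σ₂ ∧ σ₁ + a * σ₂ = 0 ∧
      ∀ s : ℝ, charFunR μ₁ s = Complex.exp (-(σ₁ * s ^ 2)) ∧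
        charFunR μ₂ s = Complex.exp (-(σ₂ * s ^ 2)) := by
  classical
  set f₁ : ℝ → ℝ := fun s => (charFunR μ₁ s).re with hf₁
  set f₂ : ℝ → ℝ := fun s => (charFunR μ₂ s).re with hf₂
  set φ : ℝ → ℝ := fun s => Real.log (f₁ s) with hφ
  set ψ : ℝ → ℝ := fun s => Real.log (f₂ s) with hψ
  have hf₁pos : ∀ s, 0 < f₁ s := fun s => (hpos₁ s).2
  have hf₂pos : ∀ s, 0 < f₂ s := fun s => (hpos₂ s).2
  have hf₁le : ∀ s, f₁ s ≤ 1 := fun s => charFunR_re_le_one μ₁ s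
  have hf₂le : ∀ s, f₂ s ≤ 1 := fun s => charFunR_re_le_one μ₂ s
  have hf₁0 : f₁ 0 = 1 := by simp [hf₁, charFunR_zero]
  have hf₂0 : f₂ 0 = 1 := by simp [hf₂, charFunR_zero]
  have hφ0 : φ 0 = 0 := by simp [hφ, hf₁0]
  have hψ0 : ψ 0 = 0 := by simp [hψ, hf₂0]
  have hφnp : ∀ s, φ s ≤ 0 := fun s => Real.log_nonpos (hf₁pos s).le (hf₁le s)
  have hψnp : ∀ s, ψ s ≤ 0 := fun s => Real.log_nonpos (hf₂pos s).le (hf₂le s)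
  have hφc : Continuous φ :=
    (Complex.continuous_re.comp (charFunR_continuous μ₁)).log fun s => (hf₁pos s).ne'
  have hψc : Continuous ψ :=
    (Complex.continuous_re.comp (charFunR_continuous μ₂)).log fun s => (hf₂pos s).ne'
  have hψeven : ∀ s, ψ (-s) = ψ s := by
    intro s
    have : f₂ (-s) = f₂ s := by
      simp only [hf₂]
      rw [charFunR_neg, Complex.conj_re]
    rw [hψ]
    simp only []
    rw [this]
  -- the real, logarithmic form of the functional equation
  have hlog : ∀ u v : ℝ, φ (u + v) + ψ (u + a * v) = φ (u - v) + ψ (u - a * v) := by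
    intro u v
    have h := congrArg Complex.re (heq u v)
    rw [Complex.mul_re, Complex.mul_re, (hpos₁ (u + v)).1, (hpos₁ (u - v)).1] at h
    simp only [zero_mul, sub_zero] at h
    have h' : f₁ (u + v) * f₂ (u + a * v) = f₁ (u - v) * f₂ (u - a * v) := h
    have := congrArg Real.log h'
    rw [Real.log_mul (hf₁pos (u + v)).ne' (hf₂pos (u + a * v)).ne',
      Real.log_mul (hf₁pos (u - v)).ne' (hf₂pos (u - a * v)).ne'] at this
    exact this
  by_cases ha1' : a = 1
  · -- degenerate case: both characteristic functions identically 1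
    subst ha1'
    refine ⟨0, 0, le_refl 0, le_refl 0, by ring, fun s => ?_⟩
    have h := hlog (s / 2) (s / 2)
    rw [show s / 2 + s / 2 = s from by ring, show s / 2 - s / 2 = 0 from by ring,
      show s / 2 + 1 * (s / 2) = s from by ring, show s / 2 - 1 * (s / 2) = 0 from by ring,
      hφ0, hψ0] at h
    have hφs : φ s = 0 := by linarith [hφnp s, hψnp s]
    have hψs : ψ s = 0 := by linarith [hφnp s, hψnp s]
    constructor
    · apply charFunR_eq_of_re μ₁ 0 s (hpos₁ s).1
      have : f₁ s = Real.exp (φ s) := (Real.exp_log (hf₁pos s)).symm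
      rw [hφs, Real.exp_zero] at this
      rw [show -((0 : ℝ) * s ^ 2) = 0 from by ring, Real.exp_zero]
      exact this
    · apply charFunR_eq_of_re μ₂ 0 s (hpos₂ s).1
      have : f₂ s = Real.exp (ψ s) := (Real.exp_log (hf₂pos s)).symm
      rw [hψs, Real.exp_zero] at this
      rw [show -((0 : ℝ) * s ^ 2) = 0 from by ring, Real.exp_zero]
      exact this
  · -- main case
    set b : ℝ := (1 + a) / 2 with hb
    set c : ℝ := (1 - a) / 2 with hc
    have hbne : b ≠ 0 := by
      rw [hb]; intro h; apply ha1; field_simp at h; linarith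
    have hcne : c ≠ 0 := by
      rw [hc]; intro h; apply ha1'; field_simp at h; linarith
    have hdne : c ^ 2 - b ^ 2 ≠ 0 := by
      rw [hb, hc, show ((1 - a) / 2) ^ 2 - ((1 + a) / 2) ^ 2 = -a from by ring]
      exact neg_ne_zero.mpr ha0
    have hE : ∀ x y : ℝ, φ x + ψ (b * x + c * y) = φ y + ψ (c * x + b * y) := by
      intro x y
      have h := hlog ((x + y) / 2) ((x - y) / 2)
      rw [show (x + y) / 2 + (x - y) / 2 = x from by ring,
        show (x + y) / 2 - (x - y) / 2 = y from by ring,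
        show (x + y) / 2 + a * ((x - y) / 2) = b * x + c * y from by rw [hb, hc]; ring,
        show (x + y) / 2 - a * ((x - y) / 2) = c * x + b * y from by rw [hb, hc]; ring] at h
      exact h
    obtain ⟨m, l, hml⟩ := heyde_quadratic_of_Q ψ hψc hψ0
      (heyde_to_Q φ ψ hψ0 b c hbne hcne hdne hE)
    have hl : l = 0 := by
      have h1 := hml 1
      have h2 := hml (-1)
      have h3 := hψeven 1
      rw [h1, h2] at h3
      norm_num at h3
      linarith
    have hψs : ∀ s, ψ s = m * s ^ 2 := by
      intro s; rw [hml s, hl]; ring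
    have hmnp : m ≤ 0 := by
      have := hψnp 1
      rw [hψs 1] at this
      nlinarith
    have hφs : ∀ s, φ s = -(m * a) * s ^ 2 := by
      intro s
      have h := hE s 0
      rw [show b * s + c * 0 = b * s from by ring, show c * s + b * 0 = c * s from by ring,
        hφ0] at h
      have : φ s = ψ (c * s) - ψ (b * s) := by linarith
      rw [this, hψs, hψs, hb, hc]
      ring
    refine ⟨m * a, -m, ?_, by linarith, by ring, fun s => ?_⟩
    · have := hφnp 1
      rw [hφs 1] at this
      nlinarith
    constructor
    · apply charFunR_eq_of_re μ₁ (m * a) s (hpos₁ s).1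
      have : f₁ s = Real.exp (φ s) := (Real.exp_log (hf₁pos s)).symm
      rw [hφs s] at this
      rw [show -(m * a * s ^ 2) = -(m * a) * s ^ 2 from by ring]
      exact this
    · apply charFunR_eq_of_re μ₂ (-m) s (hpos₂ s).1
      have : f₂ s = Real.exp (ψ s) := (Real.exp_log (hf₂pos s)).symm
      rw [hψs s] at this
      rw [show -(-m * s ^ 2) = m * s ^ 2 from by ring]
      exact this
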